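/- For every integer m ≥ 1, the sum over q from 1 to m-1 of (C(m,q)/C(2m,2q))·(8·C(m-1,q+2) + 5·C(m-1,q+1) + C(m-1,q)) (as rational numbers) equals (4/3)·m^2 - (37/3)·m - 15 + 13·4^m·(m!)^2/(2m)!. -/

import Mathlib

set_option maxHeartbeats 2000000

open Finset

/-- The Zeilberger certificate numerator polynomial. -/
def Npoly (M Q : ℚ) : ℚ :=
  16*Q^5 + (48-76*M)*Q^4 + (28-196*M+136*M^2)*Q^3 + (-12-77*M+312*M^2-108*M^3)*Q^2
    + (-8+25*M+72*M^2-228*M^3+32*M^4)*Q + (6*M-16*M^2-24*M^3+64*M^4)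

/-- The telescoping certificate. -/
noncomputable def gcert (m q : ℕ) : ℚ :=
  if q = m then 1 else
    ((m.choose q : ℚ) * ((m-1).choose q : ℚ) / ((2*m).choose (2*q) : ℚ))
      * Npoly m q / (((q:ℚ)+1)*((q:ℚ)+2)*((m:ℚ)-q)*(2*(m:ℚ)-2*q-1))

lemma cast_choose_succ_right (n k : ℕ) (h : k ≤ n) :
    (n.choose (k+1) : ℚ) * ((k:ℚ)+1) = (n.choose k : ℚ) * ((n:ℚ) - k) := by
  have h1 := Nat.choose_succ_right_eq n k
  calc (n.choose (k+1) : ℚ) * ((k:ℚ)+1) = ((n.choose (k+1) * (k+1) : ℕ) : ℚ) := by push_cast; ring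
    _ = ((n.choose k * (n - k) : ℕ) : ℚ) := by rw [h1]
    _ = (n.choose k : ℚ) * ((n:ℚ) - k) := by push_cast [Nat.cast_sub h]; ring

lemma cast_choose_succ_up (n k : ℕ) (h : k ≤ n + 1) :
    ((n+1).choose k : ℚ) * ((n:ℚ) + 1 - k) = (n.choose k : ℚ) * ((n:ℚ)+1) := by
  have h1 := Nat.choose_mul_succ_eq n k
  calc ((n+1).choose k : ℚ) * ((n:ℚ)+1-k)
      = ((n+1).choose k : ℚ) * (((n+1-k : ℕ)) : ℚ) := by rw [Nat.cast_sub h]; push_cast; ring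
    _ = (((n+1).choose k * (n+1-k) : ℕ) : ℚ) := by push_cast; ring
    _ = ((n.choose k * (n+1) : ℕ) : ℚ) := by rw [← h1]
    _ = (n.choose k : ℚ) * ((n:ℚ)+1) := by push_cast; ring

/-- Per-q certificate identity for 1 ≤ q ≤ n, with m = n+1. -/
lemma per_q (n q : ℕ) (h1 : 1 ≤ q) (hq : q ≤ n) :
    (2*((n:ℚ)+1)+1) * (((n+2).choose q : ℚ) / ((2*n+4).choose (2*q) : ℚ)
        * (8*((n+1).choose (q+2):ℚ) + 5*((n+1).choose (q+1):ℚ) + ((n+1).choose q:ℚ)))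
    - (2*((n:ℚ)+1)+2) * (((n+1).choose q : ℚ) / ((2*n+2).choose (2*q) : ℚ)
        * (8*(n.choose (q+2):ℚ) + 5*(n.choose (q+1):ℚ) + (n.choose q:ℚ)))
    = gcert (n+1) q - gcert (n+1) (q+1) := by
  have hd0 : ((2*n+2).choose (2*q) : ℚ) ≠ 0 := by
    have := Nat.choose_pos (show 2*q ≤ 2*n+2 by omega)
    positivity
  have hQ : (0:ℚ) ≤ (q:ℚ) := by positivity
  have hQN : (q:ℚ) ≤ (n:ℚ) := by exact_mod_cast hq
  have hQ1 : ((q:ℚ)+1) ≠ 0 := by positivity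
  have hQ2 : ((q:ℚ)+2) ≠ 0 := by positivity
  have hQ3 : ((q:ℚ)+3) ≠ 0 := by positivity
  have h2Q1 : (2*(q:ℚ)+1) ≠ 0 := by positivity
  have h2Q2 : (2*(q:ℚ)+2) ≠ 0 := by positivity
  have hN1Q : ((n:ℚ)+1-q) ≠ 0 := by intro h; nlinarith
  have hN2Q : ((n:ℚ)+2-q) ≠ 0 := by intro h; nlinarith
  have h2N2Q : (2*(n:ℚ)+2-2*q) ≠ 0 := by intro h; nlinarith
  have h2N1Q : (2*(n:ℚ)+1-2*q) ≠ 0 := by intro h; nlinarith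
  have h2N3Q : (2*(n:ℚ)+3-2*q) ≠ 0 := by intro h; nlinarith
  have h2N4Q : (2*(n:ℚ)+4-2*q) ≠ 0 := by intro h; nlinarith
  have hA1 : ((n+1).choose q : ℚ) = (n.choose q : ℚ)*((n:ℚ)+1)/((n:ℚ)+1-q) := by
    rw [eq_div_iff hN1Q]
    have h := cast_choose_succ_up n q (by omega)
    linarith [h]
  have hA2 : ((n+2).choose q : ℚ)
      = (n.choose q : ℚ)*((n:ℚ)+1)*((n:ℚ)+2)/((((n:ℚ)+1-q))*(((n:ℚ)+2-q))) := by
    rw [eq_div_iff (mul_ne_zero hN1Q hN2Q)]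
    have h := cast_choose_succ_up (n+1) q (by omega)
    push_cast at h
    rw [hA1] at h
    field_simp at h
    linarith [h]
  have hA3 : (n.choose (q+1) : ℚ) = (n.choose q : ℚ)*((n:ℚ)-q)/((q:ℚ)+1) := by
    rw [eq_div_iff hQ1]
    exact cast_choose_succ_right n q hq
  have hA5 : ((n+1).choose (q+1) : ℚ) = (n.choose q : ℚ)*((n:ℚ)+1)/((q:ℚ)+1) := by
    rw [eq_div_iff hQ1]
    have h := cast_choose_succ_right (n+1) q (by omega)
    push_cast at h
    rw [hA1] at h
    field_simp at h
    linarith [h]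
  have hA6 : ((n+1).choose (q+2) : ℚ)
      = (n.choose q : ℚ)*((n:ℚ)+1)*((n:ℚ)-q)/(((q:ℚ)+1)*((q:ℚ)+2)) := by
    rw [eq_div_iff (mul_ne_zero hQ1 hQ2)]
    have h := cast_choose_succ_right (n+1) (q+1) (by omega)
    push_cast at h
    rw [hA5] at h
    field_simp at h
    linarith [h]
  have hA7 : ((2*n+2).choose (2*q+1) : ℚ)
      = ((2*n+2).choose (2*q) : ℚ)*(2*(n:ℚ)+2-2*q)/(2*(q:ℚ)+1) := by
    rw [eq_div_iff h2Q1]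
    have h := cast_choose_succ_right (2*n+2) (2*q) (by omega)
    push_cast at h
    linarith [h]
  have hA8 : ((2*n+2).choose (2*q+2) : ℚ)
      = ((2*n+2).choose (2*q) : ℚ)*(2*(n:ℚ)+2-2*q)*(2*(n:ℚ)+1-2*q)/((2*(q:ℚ)+1)*(2*(q:ℚ)+2)) := by
    rw [eq_div_iff (mul_ne_zero h2Q1 h2Q2)]
    have h := cast_choose_succ_right (2*n+2) (2*q+1) (by omega)
    push_cast at h
    rw [hA7] at h
    field_simp at h
    linarith [h]
  have hA9 : ((2*n+3).choose (2*q) : ℚ)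
      = ((2*n+2).choose (2*q) : ℚ)*(2*(n:ℚ)+3)/(2*(n:ℚ)+3-2*q) := by
    rw [eq_div_iff h2N3Q]
    have h := cast_choose_succ_up (2*n+2) (2*q) (by omega)
    push_cast at h
    linarith [h]
  have hA10 : ((2*n+4).choose (2*q) : ℚ)
      = ((2*n+2).choose (2*q) : ℚ)*(2*(n:ℚ)+3)*(2*(n:ℚ)+4)/((2*(n:ℚ)+3-2*q)*(2*(n:ℚ)+4-2*q)) := by
    rw [eq_div_iff (mul_ne_zero h2N3Q h2N4Q)]
    have h := cast_choose_succ_up (2*n+3) (2*q) (by omega)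
    push_cast at h
    rw [hA9] at h
    field_simp at h
    linarith [h]
  rcases eq_or_lt_of_le hq with rfl | hlt
  · -- Case B : q = n
    have hne : q ≠ q + 1 := by omega
    rw [gcert, gcert, if_neg hne, if_pos rfl]
    have e1 : (q.choose (q+1) : ℚ) = 0 := by
      rw [Nat.choose_eq_zero_of_lt (by omega)]; norm_num
    have e2 : (q.choose (q+2) : ℚ) = 0 := by
      rw [Nat.choose_eq_zero_of_lt (by omega)]; norm_num
    have e3 : ((q+1).choose (q+2) : ℚ) = 0 := by
      rw [Nat.choose_eq_zero_of_lt (by omega)]; norm_num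
    have e4 : ((q+1).choose (q+1) : ℚ) = 1 := by
      rw [Nat.choose_self]; norm_num
    have e5 : (q.choose q : ℚ) = 1 := by rw [Nat.choose_self]; norm_num
    have e6 : ((q+1).choose q : ℚ) = (q:ℚ)+1 := by
      rw [Nat.choose_succ_self_right]; push_cast; ring
    simp only [Nat.add_sub_cancel]
    rw [show 2*(q+1) = 2*q+2 from by ring]
    rw [hA2, hA10, e1, e2, e3, e4, e5, e6]
    have hb1 : ((2*q+1).choose (2*q) : ℚ) = 2*(q:ℚ)+1 := by
      have h := cast_choose_succ_up (2*q) (2*q) (by omega)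
      rw [Nat.choose_self] at h; push_cast at h; linarith
    have hd0v : ((2*q+2).choose (2*q) : ℚ) = ((q:ℚ)+1)*(2*(q:ℚ)+1) := by
      have h := cast_choose_succ_up (2*q+1) (2*q) (by omega)
      push_cast at h; rw [hb1] at h; linear_combination h / 2
    rw [hd0v]
    push_cast [Npoly]
    have hx1 : (2*((q:ℚ)+1)-2*(q:ℚ)-1) ≠ 0 := by intro h; nlinarith
    field_simp [hQ1, hQ2, h2Q1, h2Q2, hN1Q, hN2Q, h2N1Q, h2N2Q, h2N3Q, h2N4Q, hx1]
    ring
  · -- Case A : q < n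
    have hq1n : q + 1 ≤ n := hlt
    have hNQ : ((n:ℚ)-q) ≠ 0 := by
      have : (q:ℚ) + 1 ≤ (n:ℚ) := by exact_mod_cast hq1n
      intro h; nlinarith
    have h2NQ1 : (2*(n:ℚ)-2*q-1) ≠ 0 := by
      have : (q:ℚ) + 1 ≤ (n:ℚ) := by exact_mod_cast hq1n
      intro h; nlinarith
    have hA4 : (n.choose (q+2) : ℚ)
        = (n.choose q : ℚ)*((n:ℚ)-q)*((n:ℚ)-q-1)/(((q:ℚ)+1)*((q:ℚ)+2)) := by
      rw [eq_div_iff (mul_ne_zero hQ1 hQ2)]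
      have h := cast_choose_succ_right n (q+1) hq1n
      push_cast at h
      rw [hA3] at h
      field_simp at h
      linarith [h]
    have hne1 : q ≠ n + 1 := by omega
    have hne2 : q + 1 ≠ n + 1 := by omega
    rw [gcert, gcert, if_neg hne1, if_neg hne2]
    simp only [Nat.add_sub_cancel]
    rw [show 2*(n+1) = 2*n+2 from by ring, show 2*(q+1) = 2*q+2 from by ring]
    rw [hA1, hA2, hA3, hA4, hA5, hA6, hA8, hA10]
    push_cast [Npoly]
    have hcq : (q:ℚ) + 1 ≤ (n:ℚ) := by exact_mod_cast hq1n
    have hx1 : (2*((n:ℚ)+1)-2*(q:ℚ)-1) ≠ 0 := by intro h; nlinarith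
    have hx2 : ((q:ℚ)+1+1) ≠ 0 := by positivity
    have hx3 : ((q:ℚ)+1+2) ≠ 0 := by positivity
    have hx4 : ((n:ℚ)+1-((q:ℚ)+1)) ≠ 0 := by intro h; nlinarith
    have hx5 : (2*((n:ℚ)+1)-2*((q:ℚ)+1)-1) ≠ 0 := by intro h; nlinarith
    have hx6 : (2*((n:ℚ)+1-(q:ℚ))-1) ≠ 0 := by intro h; nlinarith
    have hx7 : (2*((n:ℚ)+1-((q:ℚ)+1))-1) ≠ 0 := by intro h; nlinarith
    field_simp [hd0, hQ1, hQ2, h2Q1, h2Q2, hN1Q, hN2Q, h2N1Q, h2N2Q, h2N3Q, h2N4Q, hNQ, h2NQ1,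
      hx1, hx2, hx3, hx4, hx5, hx6, hx7]
    ring

lemma tele (f : ℕ → ℚ) (n : ℕ) :
    ∑ q ∈ Finset.Icc 1 n, (f q - f (q+1)) = f 1 - f (n+1) := by
  induction n with
  | zero => simp
  | succ k ih => rw [Finset.sum_Icc_succ_top (by omega), ih]; ring

lemma top_term (n : ℕ) :
    (2*((n:ℚ)+1)+1) * (((n+2).choose (n+1) : ℚ) / ((2*n+4).choose (2*(n+1)) : ℚ)
      * (8*((n+1).choose (n+1+2):ℚ) + 5*((n+1).choose (n+1+1):ℚ) + ((n+1).choose (n+1):ℚ))) = 1 := by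
  have e1 : ((n+1).choose (n+1+2) : ℚ) = 0 := by
    rw [Nat.choose_eq_zero_of_lt (by omega)]; norm_num
  have e2 : ((n+1).choose (n+1+1) : ℚ) = 0 := by
    rw [Nat.choose_eq_zero_of_lt (by omega)]; norm_num
  have e3 : ((n+1).choose (n+1) : ℚ) = 1 := by rw [Nat.choose_self]; norm_num
  have e4 : ((n+2).choose (n+1) : ℚ) = (n:ℚ)+2 := by
    rw [show n+2 = (n+1)+1 from rfl, Nat.choose_succ_self_right]; push_cast; ring
  have hb1 : ((2*n+3).choose (2*n+2) : ℚ) = 2*(n:ℚ)+3 := by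
    rw [show 2*n+3 = (2*n+2)+1 from rfl, Nat.choose_succ_self_right]; push_cast; ring
  have hd0v : ((2*n+4).choose (2*(n+1)) : ℚ) = ((n:ℚ)+2)*(2*(n:ℚ)+3) := by
    have h := cast_choose_succ_up (2*n+3) (2*n+2) (by omega)
    push_cast at h; rw [hb1] at h
    rw [show 2*(n+1) = 2*n+2 from by ring, show 2*n+4 = (2*n+3)+1 from rfl]
    push_cast
    linear_combination h / 2
  rw [e1, e2, e3, e4, hd0v]
  have h1 : ((n:ℚ)+2) ≠ 0 := by positivity
  have h2 : (2*(n:ℚ)+3) ≠ 0 := by positivity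
  field_simp
  ring

lemma rec_closed (n : ℕ) :
    (2*((n:ℚ)+1)+2) * ((4/3)*((n:ℚ)+1)^2 - (37/3)*((n:ℚ)+1) - 15
        + 13*4^(n+1)*((n+1).factorial : ℚ)^2 / ((2*(n+1)).factorial : ℚ)) + gcert (n+1) 1
    = (2*((n:ℚ)+1)+1) * ((4/3)*((n:ℚ)+2)^2 - (37/3)*((n:ℚ)+2) - 15
        + 13*4^(n+2)*((n+2).factorial : ℚ)^2 / ((2*(n+2)).factorial : ℚ)) := by
  have hf1 : ((n+2).factorial : ℚ) = ((n:ℚ)+2) * ((n+1).factorial : ℚ) := by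
    rw [show n+2 = (n+1)+1 from rfl, Nat.factorial_succ]; push_cast; ring
  have hf2 : ((2*(n+2)).factorial : ℚ)
      = (2*(n:ℚ)+4)*(2*(n:ℚ)+3) * ((2*(n+1)).factorial : ℚ) := by
    rw [show 2*(n+2) = (2*(n+1)+1)+1 from by ring, Nat.factorial_succ, Nat.factorial_succ]
    push_cast; ring
  have hF : ((2*(n+1)).factorial : ℚ) ≠ 0 := by
    have := Nat.factorial_pos (2*(n+1)); positivity
  have hp : (4:ℚ)^(n+2) = 4*(4:ℚ)^(n+1) := by rw [pow_succ]; ring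
  rcases Nat.eq_zero_or_pos n with rfl | hn
  · rw [gcert]
    norm_num [Nat.factorial]
  · have hne : (1:ℕ) ≠ n + 1 := by omega
    have e1 : ((n+1).choose 1 : ℚ) = (n:ℚ)+1 := by
      rw [Nat.choose_one_right]; push_cast; ring
    have e2 : (n.choose 1 : ℚ) = (n:ℚ) := by
      rw [Nat.choose_one_right]
    have e3 : ((2*(n+1)).choose (2*1) : ℚ) = ((n:ℚ)+1)*(2*(n:ℚ)+1) := by
      have h := cast_choose_succ_right (2*n+2) 1 (by omega)
      rw [Nat.choose_one_right] at h
      norm_num at h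
      rw [show 2*(n+1) = 2*n+2 from by ring, show (2:ℕ)*1 = 2 from rfl]
      push_cast at h ⊢
      linear_combination h / 2
    have eg : gcert (n+1) 1
        = (((n:ℚ)+1)*(n:ℚ)/(((n:ℚ)+1)*(2*(n:ℚ)+1))) * Npoly ((n:ℚ)+1) 1
            / (6*(n:ℚ)*(2*(n:ℚ)-1)) := by
      rw [gcert, if_neg hne]
      simp only [Nat.add_sub_cancel]
      rw [e1, e2, e3]
      push_cast
      ring
    rw [eg, hf1, hf2, hp]
    have hn1 : ((n:ℚ)) ≠ 0 := by
      have : (1:ℚ) ≤ (n:ℚ) := by exact_mod_cast hn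
      intro h; nlinarith
    have hn2 : (2*(n:ℚ)-1) ≠ 0 := by
      have : (1:ℚ) ≤ (n:ℚ) := by exact_mod_cast hn
      intro h; nlinarith
    have hn3 : ((n:ℚ)+1) ≠ 0 := by positivity
    have hn4 : (2*(n:ℚ)+1) ≠ 0 := by positivity
    push_cast [Npoly]
    field_simp
    ring

theorem dumbbell_total_sum (m : ℕ) (hm : 1 ≤ m) :
    ∑ q ∈ Finset.Icc 1 (m - 1),
      ((m.choose q : ℚ) / ((2 * m).choose (2 * q) : ℚ))
        * (8 * ((m - 1).choose (q + 2) : ℚ) + 5 * ((m - 1).choose (q + 1) : ℚ)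
            + ((m - 1).choose q : ℚ))
    = (4 / 3) * (m : ℚ) ^ 2 - (37 / 3) * (m : ℚ) - 15
      + 13 * 4 ^ m * (m.factorial : ℚ) ^ 2 / ((2 * m).factorial : ℚ) := by
  induction m, hm using Nat.le_induction with
  | base =>
    norm_num [Nat.factorial]
  | succ m hm ih =>
    obtain ⟨n, rfl⟩ : ∃ n, m = n + 1 := ⟨m - 1, by omega⟩
    simp only [Nat.add_sub_cancel] at ih ⊢
    simp only [show n+1+1 = n+2 from rfl, show 2*(n+2) = 2*n+4 from by ring]
    simp only [show 2*(n+1) = 2*n+2 from by ring] at ih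
    push_cast at ih ⊢
    have h2M : (2*((n:ℚ)+1)+1) ≠ 0 := by positivity
    apply mul_left_cancel₀ h2M
    have key : ∑ q ∈ Finset.Icc 1 n,
          ((2*((n:ℚ)+1)+1) * (((n+2).choose q : ℚ) / ((2*n+4).choose (2*q) : ℚ)
            * (8*((n+1).choose (q+2):ℚ) + 5*((n+1).choose (q+1):ℚ) + ((n+1).choose q:ℚ))))
        = ∑ q ∈ Finset.Icc 1 n,
          ((2*((n:ℚ)+1)+2) * (((n+1).choose q : ℚ) / ((2*n+2).choose (2*q) : ℚ)
              * (8*(n.choose (q+2):ℚ) + 5*(n.choose (q+1):ℚ) + (n.choose q:ℚ)))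
            + (gcert (n+1) q - gcert (n+1) (q+1))) := by
      refine Finset.sum_congr rfl fun q hq => ?_
      have hq' := Finset.mem_Icc.mp hq
      have h := per_q n q hq'.1 hq'.2
      linarith [h]
    calc (2*((n:ℚ)+1)+1) * ∑ q ∈ Finset.Icc 1 (n+1),
          (((n+2).choose q : ℚ) / ((2*n+4).choose (2*q) : ℚ)
            * (8*((n+1).choose (q+2):ℚ) + 5*((n+1).choose (q+1):ℚ) + ((n+1).choose q:ℚ)))
        = (∑ q ∈ Finset.Icc 1 n,
            ((2*((n:ℚ)+1)+1) * (((n+2).choose q : ℚ) / ((2*n+4).choose (2*q) : ℚ)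
              * (8*((n+1).choose (q+2):ℚ) + 5*((n+1).choose (q+1):ℚ) + ((n+1).choose q:ℚ)))))
          + (2*((n:ℚ)+1)+1) * (((n+2).choose (n+1) : ℚ) / ((2*n+4).choose (2*(n+1)) : ℚ)
            * (8*((n+1).choose (n+1+2):ℚ) + 5*((n+1).choose (n+1+1):ℚ) + ((n+1).choose (n+1):ℚ))) := by
          rw [Finset.sum_Icc_succ_top (by omega), mul_add, Finset.mul_sum]
      _ = (∑ q ∈ Finset.Icc 1 n,
            ((2*((n:ℚ)+1)+2) * (((n+1).choose q : ℚ) / ((2*n+2).choose (2*q) : ℚ)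
                * (8*(n.choose (q+2):ℚ) + 5*(n.choose (q+1):ℚ) + (n.choose q:ℚ)))
              + (gcert (n+1) q - gcert (n+1) (q+1)))) + 1 := by
          rw [key, top_term n]
      _ = (2*((n:ℚ)+1)+2) * (∑ q ∈ Finset.Icc 1 n,
            (((n+1).choose q : ℚ) / ((2*n+2).choose (2*q) : ℚ)
              * (8*(n.choose (q+2):ℚ) + 5*(n.choose (q+1):ℚ) + (n.choose q:ℚ))))
          + (gcert (n+1) 1 - gcert (n+1) (n+1)) + 1 := by
          rw [Finset.sum_add_distrib, ← Finset.mul_sum, tele (fun q => gcert (n+1) q) n]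
      _ = (2*((n:ℚ)+1)+2) * ((4/3)*((n:ℚ)+1)^2 - (37/3)*((n:ℚ)+1) - 15
            + 13*4^(n+1)*((n+1).factorial : ℚ)^2 / ((2*n+2).factorial : ℚ)) + gcert (n+1) 1 := by
          rw [ih]
          have hg : gcert (n+1) (n+1) = 1 := by rw [gcert, if_pos rfl]
          rw [hg]
          ring
      _ = (2*((n:ℚ)+1)+1) * ((4/3)*((n:ℚ)+2)^2 - (37/3)*((n:ℚ)+2) - 15
            + 13*4^(n+2)*((n+2).factorial : ℚ)^2 / ((2*n+4).factorial : ℚ)) := by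
          have h := rec_closed n
          rw [show 2*(n+1) = 2*n+2 from by ring, show 2*(n+2) = 2*n+4 from by ring] at h
          linarith [h]
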